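/- NPr¹(ℵ₁) holds: there is a model 𝕄* with universe ω₁ and countable vocabulary such that 1 + rk(w, 𝕄*) ≤ 1 (i.e. rk(w, 𝕄*) ≤ 0) for all nonempty finite w ⊆ ω₁. -/

import Mathlib

open FirstOrder Cardinal

/-- The increasing enumeration of a finite set in a linear order. -/
noncomputable def enumFun {M : Type*} [LinearOrder M] (w : Finset M) : Fin w.card → M :=
  fun i => (w.orderIsoOfFin rfl i : M)

/-- `rk(w,𝕄) ≥ 0`. -/
def rkBase (L : Language) (M : Type*) [LinearOrder M] [L.Structure M] (w : Finset M) : Prop :=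
  ∀ φ : L.Formula (Fin w.card), φ.IsQF → ∀ k : Fin w.card,
    φ.Realize (enumFun w) →
      ¬ ({α : M | φ.Realize (Function.update (enumFun w) k α)}).Countable

/-- Successor step of the splitting rank. -/
def rkSucc (L : Language) (M : Type*) [LinearOrder M] [L.Structure M]
    (IH : Finset M → Prop) (w : Finset M) : Prop :=
  ∀ φ : L.Formula (Fin w.card), φ.IsQF → ∀ k : Fin w.card,
    φ.Realize (enumFun w) →
      ∃ α : M, α ∉ w ∧ IH (insert α w) ∧ φ.Realize (Function.update (enumFun w) k α)

/-- The splitting rank relation `rk(w,𝕄) ≥ δ`. -/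
noncomputable def rkGe (L : Language) (M : Type*) [LinearOrder M] [L.Structure M]
    (δ : Ordinal) : Finset M → Prop :=
  Ordinal.limitRecOn δ (rkBase L M) (fun _ IH => rkSucc L M IH)
    (fun _ _ IH w => ∀ γ (hγ : γ < _), IH γ hγ w)

/-- `NPr^ε(λ)`: there is a model with universe of cardinality `λ` in a countable vocabulary
all of whose nonempty finite subsets `w` satisfy `1 + rk(w) ≤ ε`. -/
def NPr (ε : Ordinal) (lam : Cardinal) : Prop :=
  ∃ (M : Type) (instO : LinearOrder M) (L : FirstOrder.Language.{0, 0}) (instS : L.Structure M),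
    Cardinal.mk M = lam ∧ L.card ≤ Cardinal.aleph0 ∧
    ∀ w : Finset M, w.Nonempty → ∀ δ : Ordinal, @rkGe L M instO instS δ w → 1 + δ ≤ ε

section Aux

lemma rkGe_zero {L : Language} {M : Type*} [LinearOrder M] [L.Structure M] :
    rkGe L M 0 = rkBase L M :=
  Ordinal.limitRecOn_zero _ _ _

lemma rkGe_succ {L : Language} {M : Type*} [LinearOrder M] [L.Structure M] (γ : Ordinal) :
    rkGe L M (Order.succ γ) = rkSucc L M (rkGe L M γ) :=
  Ordinal.limitRecOn_succ _ _ _ _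

lemma rkGe_limit {L : Language} {M : Type*} [LinearOrder M] [L.Structure M] {δ : Ordinal}
    (h : Order.IsSuccLimit δ) (w : Finset M) :
    rkGe L M δ w ↔ ∀ γ < δ, rkGe L M γ w := by
  unfold rkGe
  rw [Ordinal.limitRecOn_limit _ _ _ _ h]

variable {M : Type} [LinearOrder M]

/-- The formula `xᵢ ≤ xⱼ` in the language of orders. -/
noncomputable def leF (n : ℕ) (i j : Fin n) : Language.order.Formula (Fin n) :=
  Language.Term.le (Language.var (Sum.inl i)) (Language.var (Sum.inl j))

lemma leF_isQF (n : ℕ) (i j : Fin n) : (leF n i j).IsQF :=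
  Language.BoundedFormula.IsAtomic.isQF (Language.BoundedFormula.IsAtomic.rel _ _)

lemma leF_realize [Language.order.Structure M] [Language.order.OrderedStructure M]
    (n : ℕ) (i j : Fin n) (v : Fin n → M) :
    (leF n i j).Realize v ↔ v i ≤ v j := by
  simp [leF, Language.Formula.Realize]

lemma enumFun_mono {w : Finset M} : Monotone (enumFun w) := fun i j hij => by
  have := (w.orderIsoOfFin rfl).monotone hij
  exact this

/-- Key fact: if all `Iic` sets are countable, `rkBase` fails for sets of size ≥ 2. -/
lemma not_rkBase [Language.order.Structure M] [Language.order.OrderedStructure M]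
    (hcc : ∀ a : M, (Set.Iic a).Countable)
    (w : Finset M) (hw : 2 ≤ w.card) : ¬ rkBase Language.order M w := by
  intro h
  have h0 : (0 : ℕ) < w.card := by omega
  have h1 : (1 : ℕ) < w.card := by omega
  set i0 : Fin w.card := ⟨0, h0⟩
  set i1 : Fin w.card := ⟨1, h1⟩
  have hreal : (leF w.card i0 i1).Realize (enumFun w) := by
    rw [leF_realize]
    exact enumFun_mono (by simp [i0, i1, Fin.le_def])
  have := h (leF w.card i0 i1) (leF_isQF _ _ _) i0 hreal
  apply this
  have hset : {α : M | (leF w.card i0 i1).Realize (Function.update (enumFun w) i0 α)}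
      = Set.Iic (enumFun w i1) := by
    ext α
    rw [Set.mem_setOf_eq, leF_realize]
    rw [Function.update_self, Function.update_of_ne (by simp [i0, i1, Fin.ext_iff])]
    rfl
  rw [hset]
  exact hcc _

/-- Main abstract lemma: if `rkBase` fails on all sets of size ≥ 2, any nonempty set
with `rkGe δ` has `δ = 0`. -/
lemma rkGe_eq_zero [Language.order.Structure M] [Language.order.OrderedStructure M]
    (hB : ∀ w : Finset M, 2 ≤ w.card → ¬ rkBase Language.order M w) :
    ∀ δ : Ordinal, ∀ w : Finset M, w.Nonempty → rkGe Language.order M δ w → δ = 0 := by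
  intro δ
  induction δ using Ordinal.induction with
  | h δ IH =>
    intro w hw hr
    by_contra hδ
    rcases Ordinal.zero_or_succ_or_isSuccLimit δ with h0 | ⟨γ, rfl⟩ | hlim
    · exact hδ h0
    · rw [rkGe_succ] at hr
      have hcard : 0 < w.card := Finset.card_pos.2 hw
      set k : Fin w.card := ⟨0, hcard⟩
      have hreal : (leF w.card k k).Realize (enumFun w) := by
        rw [leF_realize]
      obtain ⟨α, hαw, hIH, -⟩ := hr (leF w.card k k) (leF_isQF _ _ _) k hreal
      have hne : (insert α w).Nonempty := ⟨α, Finset.mem_insert_self _ _⟩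
      have hγ0 : γ = 0 := IH γ (Order.lt_succ γ) _ hne hIH
      subst hγ0
      rw [rkGe_zero] at hIH
      refine hB (insert α w) ?_ hIH
      rw [Finset.card_insert_of_notMem hαw]
      omega
    · have h1 : (1 : Ordinal) < δ := by
        have := hlim.succ_lt hlim.pos
        simpa using this
      have hr1 : rkGe Language.order M 1 w := (rkGe_limit hlim w).1 hr 1 h1
      have := IH 1 h1 w hw hr1
      simp at this

end Aux

/-- `NPr¹(ℵ₁)` holds. -/
theorem stmt_6 : NPr 1 (Cardinal.aleph 1) := by
  classical
  set M : Type := (Cardinal.aleph 1).ord.ToType with hM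
  letI instO : LinearOrder M := inferInstance
  letI instS : Language.order.Structure M := Language.orderStructure M
  haveI : Language.order.OrderedStructure M := ⟨fun _ => Iff.rfl⟩
  refine ⟨M, instO, Language.order, instS, ?_, ?_, ?_⟩
  · rw [hM, Cardinal.mk_toType, Cardinal.card_ord]
  · rw [Language.order.card_eq_one]
    exact one_le_aleph0
  · intro w hw δ hr
    have hcc : ∀ a : M, (Set.Iic a).Countable := by
      intro a
      have h := Cardinal.mk_Iio_ord_toType a
      have h2 : (Set.Iio a).Countable := (countable_iff_lt_aleph_one _).2 h
      have h3 : Set.Iic a = insert a (Set.Iio a) := by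
        ext x; simp [le_iff_lt_or_eq, or_comm]
      rw [h3]
      exact Set.Countable.insert _ h2
    have hB := not_rkBase hcc
    have hδ : δ = 0 := rkGe_eq_zero hB δ w hw hr
    simp [hδ]
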